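/- arXiv:0903.4843 — 2 statements merged into one kernel-verified Lean document; each statement's English description precedes it below -/
import Mathlib

section
/- Let H be the real vector space of Hermitian d×d complex matrices with the Hilbert–Schmidt inner product. Suppose {F_i}_{i=1}^n and {D_i}_{i=1}^n are families of Hermitian matrices with all F_i and all D_i positive semidefinite, Σ_i F_i = 1 (the identity matrix), and A = Σ_i Tr(F_i A) D_i for all Hermitian A (i.e., {D_i} is a dual frame to {F_i}). Then d = 1. Equivalently, for d ≥ 2 no positive frame has a positive dual frame. -/
open Matrix
open scoped ComplexOrder

theorem no_positive_frame_with_positive_dual {d n : ℕ} (hd : 2 ≤ d)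
    (F D : Fin n → Matrix (Fin d) (Fin d) ℂ)
    (hFpos : ∀ i, (F i).PosSemidef) (hDpos : ∀ i, (D i).PosSemidef)
    (hsum : ∑ i, F i = 1)
    (hdual : ∀ A : Matrix (Fin d) (Fin d) ℂ, A.IsHermitian →
      A = ∑ i, (F i * A).trace • D i) :
    False := by
  classical
  set j0 : Fin d := ⟨0, by omega⟩ with hj0
  set j1 : Fin d := ⟨1, by omega⟩ with hj1
  have hj : j0 ≠ j1 := by simp [hj0, hj1, Fin.ext_iff]
  set q : Matrix (Fin d) (Fin d) ℂ → (Fin d → ℂ) → ℂ :=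
    fun M x => star x ⬝ᵥ M *ᵥ x with hq
  -- sum of matrices mulVec
  have hsmv : ∀ (f : Fin n → Matrix (Fin d) (Fin d) ℂ) (w : Fin d → ℂ),
      (∑ i, f i) *ᵥ w = ∑ i, f i *ᵥ w := by
    intro f w
    funext j
    simp only [mulVec, dotProduct, Matrix.sum_apply, Finset.sum_apply, Finset.sum_mul]
    rw [Finset.sum_comm]
  -- trace computation
  have htr : ∀ (M : Matrix (Fin d) (Fin d) ℂ) (v : Fin d → ℂ),
      (M * vecMulVec v (star v)).trace = q M v := by
    intro M v
    simp only [hq, Matrix.trace, Matrix.diag, Matrix.mul_apply, vecMulVec_apply,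
      dotProduct, mulVec, Pi.star_apply, Finset.mul_sum]
    exact Finset.sum_congr rfl fun j _ => Finset.sum_congr rfl fun k _ => by ring
  -- key identity
  have key : ∀ v w : Fin d → ℂ,
      (star v ⬝ᵥ w) * (star w ⬝ᵥ v) = ∑ i, q (F i) v * q (D i) w := by
    intro v w
    have hherm : (vecMulVec v (star v)).IsHermitian := by
      ext j k
      simp [Matrix.conjTranspose_apply, vecMulVec_apply, mul_comm]
    have h := congrArg (fun M : Matrix (Fin d) (Fin d) ℂ => star w ⬝ᵥ M *ᵥ w)
      (hdual _ hherm)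
    have hlhs : star w ⬝ᵥ (vecMulVec v (star v)) *ᵥ w
        = (star v ⬝ᵥ w) * (star w ⬝ᵥ v) := by
      simp only [dotProduct, mulVec, vecMulVec_apply, Pi.star_apply,
        Finset.mul_sum, Finset.sum_mul]
      exact Finset.sum_congr rfl fun j _ => Finset.sum_congr rfl fun k _ => by ring
    rw [hlhs] at h
    have hds : ∀ f : Fin n → (Fin d → ℂ), star w ⬝ᵥ (∑ i, f i) = ∑ i, star w ⬝ᵥ f i := by
      intro f
      simp only [dotProduct, Finset.sum_apply, Finset.mul_sum]
      rw [Finset.sum_comm]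
    rw [h, hsmv, hds]
    exact Finset.sum_congr rfl fun i _ => by
      rw [htr, smul_mulVec, dotProduct_smul, smul_eq_mul]
  clear hsmv htr
  -- nonnegativity of terms
  have hnn : ∀ (i : Fin n) (v w : Fin d → ℂ), 0 ≤ q (F i) v * q (D i) w :=
    fun i v w => mul_nonneg ((hFpos i).dotProduct_mulVec_nonneg v) ((hDpos i).dotProduct_mulVec_nonneg w)
  -- orthogonality kills each term
  have hzero : ∀ (v w : Fin d → ℂ), star v ⬝ᵥ w = 0 →
      ∀ i, q (F i) v * q (D i) w = 0 := by
    intro v w hvw i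
    have h := key v w
    rw [hvw, zero_mul] at h
    exact (Finset.sum_eq_zero_iff_of_nonneg (fun j _ => hnn j v w)).mp h.symm i
      (Finset.mem_univ i)
  -- the test vectors
  set v : ℝ → (Fin d → ℂ) := fun t j =>
    if j = j0 then 1 else if j = j1 then (t : ℂ) else 0 with hv
  set u : ℝ → (Fin d → ℂ) := fun t j =>
    if j = j0 then (t : ℂ) else if j = j1 then -1 else 0 with hu
  have hpair : ∀ f : Fin d → ℂ, (∀ j, j ≠ j0 → j ≠ j1 → f j = 0) →
      ∑ j, f j = f j0 + f j1 := by
    intro f hf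
    rw [← Finset.sum_pair hj]
    refine (Finset.sum_subset (Finset.subset_univ _) fun x _ hx => ?_).symm
    simp only [Finset.mem_insert, Finset.mem_singleton] at hx
    push_neg at hx
    exact hf x hx.1 hx.2
  have horth : ∀ t : ℝ, star (u t) ⬝ᵥ v t = 0 := by
    intro t
    simp only [dotProduct, Pi.star_apply, hu, hv]
    rw [hpair _ (fun j h1 h2 => by simp [h1, h2])]
    simp [hj, hj.symm, Complex.conj_ofReal]
  have hvne : ∀ t : ℝ, v t ≠ 0 := by
    intro t hcon
    have := congrFun hcon j0
    simp [hv] at this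
  have hvv : ∀ t : ℝ, star (v t) ⬝ᵥ v t ≠ 0 := by
    intro t h
    exact hvne t (dotProduct_star_self_eq_zero.mp h)
  -- choice of index for each t
  have hex : ∀ t : ℝ, ∃ i, q (F i) (v t) ≠ 0 ∧ q (D i) (v t) ≠ 0 := by
    intro t
    by_contra hcon
    push_neg at hcon
    have h := key (v t) (v t)
    rw [Finset.sum_eq_zero (fun i _ => by
      rcases Classical.em (q (F i) (v t) = 0) with h0 | h0
      · rw [h0, zero_mul]
      · rw [hcon i h0, mul_zero])] at h
    exact hvv t (mul_self_eq_zero.mp h)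
  choose g hg1 hg2 using hex
  -- F (g t) kills u t
  have hker : ∀ t : ℝ, F (g t) *ᵥ u t = 0 := by
    intro t
    have h := hzero (u t) (v t) (horth t) (g t)
    have hF0 : q (F (g t)) (u t) = 0 := by
      rcases mul_eq_zero.mp h with h | h
      · exact h
      · exact absurd h (hg2 t)
    exact ((hFpos (g t)).dotProduct_mulVec_zero_iff (u t)).mp hF0
  -- injectivity of g
  have hginj : Function.Injective g := by
    intro t s hts
    by_contra hne
    set M := F (g t) with hM
    have h1 : M *ᵥ u t = 0 := hker t
    have h2 : M *ᵥ u s = 0 := by rw [hM, hts]; exact hker s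
    -- basis vectors
    set e0 : Fin d → ℂ := fun j => if j = j0 then 1 else 0 with he0
    set e1 : Fin d → ℂ := fun j => if j = j1 then 1 else 0 with he1
    have hue : ∀ r : ℝ, u r = (r : ℂ) • e0 - e1 := by
      intro r
      funext j
      by_cases hc0 : j = j0
      · simp [hu, he0, he1, hc0, hj, hj.symm]
      · by_cases hc1 : j = j1
        · simp [hu, he0, he1, hc0, hc1, hj, hj.symm]
        · simp [hu, he0, he1, hc0, hc1]
    have hts' : (t : ℂ) ≠ (s : ℂ) := by
      intro h; exact hne (by exact_mod_cast h)
    have hMe0 : M *ᵥ e0 = 0 := by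
      have hdiff : M *ᵥ (u t - u s) = 0 := by
        rw [mulVec_sub, h1, h2, sub_zero]
      have : u t - u s = ((t : ℂ) - (s : ℂ)) • e0 := by
        rw [hue t, hue s]; module
      rw [this, mulVec_smul] at hdiff
      exact (smul_eq_zero.mp hdiff).resolve_left (sub_ne_zero.mpr hts')
    have hMe1 : M *ᵥ e1 = 0 := by
      have : M *ᵥ ((t : ℂ) • e0 - u t) = 0 := by
        rw [mulVec_sub, mulVec_smul, hMe0, h1, smul_zero, sub_zero]
      rw [show (t : ℂ) • e0 - u t = e1 by rw [hue t]; module] at this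
      exact this
    have hve : v t = e0 + (t : ℂ) • e1 := by
      funext j
      by_cases hc0 : j = j0
      · simp [hv, he0, he1, hc0, hj, hj.symm]
      · by_cases hc1 : j = j1
        · simp [hv, he0, he1, hc0, hc1, hj, hj.symm]
        · simp [hv, he0, he1, hc0, hc1]
    have hMv : M *ᵥ v t = 0 := by
      rw [hve, mulVec_add, mulVec_smul, hMe0, hMe1, smul_zero, add_zero]
    apply hg1 t
    simp only [hq, hM] at *
    rw [hMv, dotProduct_zero]
  -- pigeonhole
  have hinj2 : Function.Injective (fun k : Fin (n + 1) => g (k : ℝ)) := by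
    intro k l hkl
    have := hginj hkl
    have : (k : ℕ) = (l : ℕ) := by exact_mod_cast this
    exact Fin.ext this
  have hcard := Fintype.card_le_of_injective _ hinj2
  simp at hcard
end

section
/- There is no classical representation of quantum theory in finite dimension d ≥ 2 over a finite ontic space: there do not exist a finite set Λ and maps μ : D(ℂ^d) → probability distributions on Λ and ξ : E(ℂ^d) → [0,1]^Λ such that Tr(ρE) = Σ_λ μ_ρ(λ) ξ_E(λ) for all density operators ρ and effects E. -/
open Matrix
open scoped ComplexOrder

noncomputable section NCR

namespace NCRaux

/-- unit vector (1, t)/√(1+t²) padded with zeros -/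
def w (d : ℕ) (t : ℝ) : Fin d → ℝ := fun a =>
  if a.val = 0 then 1 / Real.sqrt (1 + t ^ 2)
  else if a.val = 1 then t / Real.sqrt (1 + t ^ 2) else 0

/-- rank-one projector onto w -/
def P (d : ℕ) (t : ℝ) : Matrix (Fin d) (Fin d) ℂ :=
  Matrix.of fun a b => ((w d t a : ℂ) * (w d t b : ℂ))

lemma sqrt_pos (t : ℝ) : 0 < Real.sqrt (1 + t ^ 2) :=
  Real.sqrt_pos.2 (by positivity)

lemma sum_w {d : ℕ} (hd : 2 ≤ d) (s t : ℝ) :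
    ∑ a, w d s a * w d t a
      = (1 + s * t) / (Real.sqrt (1 + s ^ 2) * Real.sqrt (1 + t ^ 2)) := by
  have h0 : (0 : ℕ) < d := by omega
  have h1 : (1 : ℕ) < d := by omega
  set i0 : Fin d := ⟨0, h0⟩
  set i1 : Fin d := ⟨1, h1⟩
  have hne : i0 ≠ i1 := by simp [i0, i1, Fin.ext_iff]
  have hsub : ({i0, i1} : Finset (Fin d)) ⊆ Finset.univ := Finset.subset_univ _
  rw [← Finset.sum_subset hsub ?_]
  · rw [Finset.sum_pair hne]
    have hA := sqrt_pos s
    have hB := sqrt_pos t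
    simp only [w, i0, i1]
    norm_num
    field_simp
  · intro a _ ha
    have h0' : a.val ≠ 0 := by
      intro h; exact ha (by simp [Finset.mem_insert, Fin.ext_iff, i0, i1, h])
    have h1' : a.val ≠ 1 := by
      intro h; exact ha (by simp [Finset.mem_insert, Fin.ext_iff, i0, i1, h])
    simp [w, h0', h1']

lemma sum_w_self {d : ℕ} (hd : 2 ≤ d) (t : ℝ) :
    ∑ a, w d t a * w d t a = 1 := by
  rw [sum_w hd, Real.mul_self_sqrt (by positivity)]
  field_simp

lemma trace_P {d : ℕ} (hd : 2 ≤ d) (t : ℝ) : (P d t).trace = 1 := by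
  have : (P d t).trace = ((∑ a, w d t a * w d t a : ℝ) : ℂ) := by
    simp [P, Matrix.trace, Matrix.diag]
  rw [this, sum_w_self hd]
  norm_num

lemma trace_PP {d : ℕ} (s t : ℝ) :
    (P d s * P d t).trace = (((∑ a, w d s a * w d t a) ^ 2 : ℝ) : ℂ) := by
  have : (P d s * P d t).trace
      = ∑ a, ∑ c, ((w d s a : ℂ) * w d s c) * ((w d t c : ℂ) * w d t a) := by
    simp [Matrix.trace, Matrix.mul_apply, P, Matrix.diag]
  rw [this]
  have : ∑ a, ∑ c, ((w d s a : ℂ) * w d s c) * ((w d t c : ℂ) * w d t a)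
      = (∑ a, (w d s a : ℂ) * w d t a) * (∑ c, (w d s c : ℂ) * w d t c) := by
    rw [Finset.sum_mul_sum]
    exact Finset.sum_congr rfl fun a _ => Finset.sum_congr rfl fun c _ => by ring
  rw [this]
  push_cast
  ring

lemma herm_P (d : ℕ) (t : ℝ) : (P d t).IsHermitian := by
  ext a b
  simp [P, Matrix.conjTranspose_apply, ← Complex.ofReal_mul, mul_comm]

lemma psd_P (d : ℕ) (t : ℝ) : (P d t).PosSemidef := by
  refine Matrix.posSemidef_iff_dotProduct_mulVec.mpr ⟨herm_P d t, fun x => ?_⟩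
  have key : dotProduct (star x) (P d t *ᵥ x)
      = star (∑ b, (w d t b : ℂ) * x b) * (∑ b, (w d t b : ℂ) * x b) := by
    simp only [dotProduct, mulVec, P, Matrix.of_apply, Pi.star_apply, star_sum, star_mul',
      Complex.star_def, Complex.conj_ofReal]
    rw [Finset.sum_mul_sum]
    refine Finset.sum_congr rfl fun a _ => ?_
    simp only [Finset.mul_sum, Finset.sum_mul]
    refine Finset.sum_congr rfl fun b _ => ?_
    ring
  rw [key]
  exact star_mul_self_nonneg _

lemma PP_eq_P {d : ℕ} (hd : 2 ≤ d) (t : ℝ) : P d t * P d t = P d t := by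
  ext a b
  simp only [Matrix.mul_apply, P, Matrix.of_apply]
  have : ∑ c, ((w d t a : ℂ) * w d t c) * ((w d t c : ℂ) * w d t b)
      = ((w d t a : ℂ) * w d t b) * ∑ c, ((w d t c : ℂ) * w d t c) := by
    rw [Finset.mul_sum]
    exact Finset.sum_congr rfl fun c _ => by ring
  rw [this]
  have hs : (∑ c, ((w d t c : ℂ) * w d t c)) = 1 := by
    push_cast [← Complex.ofReal_mul]
    rw [← Complex.ofReal_sum]
    norm_cast
    exact sum_w_self hd t
  rw [hs, mul_one]

lemma psd_one_sub_P {d : ℕ} (hd : 2 ≤ d) (t : ℝ) : (1 - P d t).PosSemidef := by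
  set M := 1 - P d t with hM
  have hherm : M.IsHermitian := (Matrix.isHermitian_one).sub (herm_P d t)
  have hMM : M * M = M := by
    simp only [hM, sub_mul, mul_sub, one_mul, mul_one, PP_eq_P hd]
    abel
  have := Matrix.posSemidef_conjTranspose_mul_self M
  rwa [hherm.eq, hMM] at this

lemma ipsq_lt_one {s t : ℝ} (hst : s ≠ t) {d : ℕ} (hd : 2 ≤ d) :
    (∑ a, w d s a * w d t a) ^ 2 < 1 := by
  rw [sum_w hd]
  have hA := sqrt_pos s
  have hB := sqrt_pos t
  rw [div_pow, div_lt_one (by positivity), mul_pow,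
    Real.sq_sqrt (by positivity : (0:ℝ) ≤ 1 + s ^ 2),
    Real.sq_sqrt (by positivity : (0:ℝ) ≤ 1 + t ^ 2)]
  have h : (0:ℝ) < (s - t) ^ 2 := by
    have : s - t ≠ 0 := sub_ne_zero.2 hst
    positivity
  nlinarith [h]

end NCRaux

end NCR

theorem no_classical_representation {d : ℕ} (hd : 2 ≤ d) :
    ¬ ∃ (Λ : Type) (_ : Fintype Λ)
        (μ : {ρ : Matrix (Fin d) (Fin d) ℂ // ρ.PosSemidef ∧ ρ.trace = 1} → Λ → ℝ)
        (ξ : {E : Matrix (Fin d) (Fin d) ℂ // E.PosSemidef ∧ (1 - E).PosSemidef} → Λ → ℝ),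
      (∀ ρ, (∀ l, 0 ≤ μ ρ l) ∧ ∑ l, μ ρ l = 1) ∧
      (∀ E l, 0 ≤ ξ E l ∧ ξ E l ≤ 1) ∧
      (∀ ρ E, ((ρ.1 * E.1).trace : ℂ) = ((∑ l, μ ρ l * ξ E l : ℝ) : ℂ)) := by
  classical
  rintro ⟨Λ, hΛ, μ, ξ, hμ, hξ, hTr⟩
  set N : ℕ := 2 ^ Fintype.card Λ + 1 with hN
  -- states and effects
  set ρi : Fin N → {ρ : Matrix (Fin d) (Fin d) ℂ // ρ.PosSemidef ∧ ρ.trace = 1} :=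
    fun i => ⟨NCRaux.P d (i : ℕ), NCRaux.psd_P d _, NCRaux.trace_P hd _⟩ with hρi
  set Ei : Fin N → {E : Matrix (Fin d) (Fin d) ℂ // E.PosSemidef ∧ (1 - E).PosSemidef} :=
    fun i => ⟨NCRaux.P d (i : ℕ), NCRaux.psd_P d _, NCRaux.psd_one_sub_P hd _⟩ with hEi
  -- the sum representation, as reals
  have hsum : ∀ i j : Fin N,
      ∑ l, μ (ρi i) l * ξ (Ei j) l
        = (∑ a, NCRaux.w d (i : ℕ) a * NCRaux.w d (j : ℕ) a) ^ 2 := by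
    intro i j
    have h := hTr (ρi i) (Ei j)
    rw [hρi, hEi] at h
    simp only at h
    rw [NCRaux.trace_PP] at h
    exact_mod_cast h.symm
  -- ξ equals 1 on the support of μ for matching index
  have hξ1 : ∀ i : Fin N, ∀ l, μ (ρi i) l ≠ 0 → ξ (Ei i) l = 1 := by
    intro i l hl
    have h1 : ∑ l, μ (ρi i) l * ξ (Ei i) l = 1 := by
      rw [hsum i i]
      have : (∑ a, NCRaux.w d (i : ℕ) a * NCRaux.w d (i : ℕ) a) = 1 :=
        NCRaux.sum_w_self hd _
      rw [this]; norm_num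
    have hzero : ∑ l, μ (ρi i) l * (1 - ξ (Ei i) l) = 0 := by
      have := (hμ (ρi i)).2
      simp only [mul_sub, mul_one, Finset.sum_sub_distrib, this, h1, sub_self]
    have hnn : ∀ l ∈ Finset.univ, 0 ≤ μ (ρi i) l * (1 - ξ (Ei i) l) := by
      intro l _
      exact mul_nonneg ((hμ (ρi i)).1 l) (by linarith [(hξ (Ei i) l).2])
    have := (Finset.sum_eq_zero_iff_of_nonneg hnn).1 hzero l (Finset.mem_univ l)
    rcases mul_eq_zero.1 this with h | h
    · exact absurd h hl
    · linarith
  -- pigeonhole on supports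
  have hcard : Fintype.card (Finset Λ) < Fintype.card (Fin N) := by
    rw [Fintype.card_finset, Fintype.card_fin, hN]
    omega
  obtain ⟨i, j, hij, hS⟩ := Fintype.exists_ne_map_eq_of_card_lt
    (fun i : Fin N => Finset.univ.filter fun l => μ (ρi i) l ≠ 0) hcard
  -- then ∑ μ_j ξ_i = 1
  have hone : ∑ l, μ (ρi j) l * ξ (Ei i) l = 1 := by
    have : ∀ l, μ (ρi j) l * ξ (Ei i) l = μ (ρi j) l := by
      intro l
      by_cases h : μ (ρi j) l = 0
      · simp [h]
      · have hmem : l ∈ Finset.univ.filter fun l => μ (ρi j) l ≠ 0 := by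
          simp [h]
        rw [← hS] at hmem
        have : μ (ρi i) l ≠ 0 := (Finset.mem_filter.1 hmem).2
        rw [hξ1 i l this, mul_one]
    simp only [this]
    exact (hμ (ρi j)).2
  -- but it is < 1
  have hlt : ∑ l, μ (ρi j) l * ξ (Ei i) l < 1 := by
    rw [hsum j i]
    refine NCRaux.ipsq_lt_one ?_ hd
    intro h
    apply hij
    have : ((i : ℕ) : ℝ) = ((j : ℕ) : ℝ) := h.symm
    exact Fin.ext (Nat.cast_injective this)
  linarith [hone, hlt]
end
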